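/- Let H be a finite-dimensional real inner product space, let β > 0, let C be a nonempty closed convex subset of H, let g : H → ℝ be convex and differentiable with β-Lipschitz gradient, and assume that g attains its minimum over C at some point. Let x₀ ∈ C, let 0 < ε < 1/β, let (γₙ) be a sequence in [ε, 2/β − ε], and define the projected gradient iterates by xₙ₊₁ = proj_C(xₙ − γₙ ∇g(xₙ)), where proj_C denotes the metric projection onto C. Then the sequence (xₙ) converges to a minimizer of g over C. -/

import Mathlib

open Filter Topology RealInnerProductSpace

noncomputable section

variable {H : Type*} [NormedAddCommGroup H] [InnerProductSpace ℝ H] [CompleteSpace H]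

lemma aux_deriv_le {φ : ℝ → ℝ} {d M : ℝ} (hφ : HasDerivAt φ d 0)
    (h : ∀ t ∈ Set.Ioc (0:ℝ) 1, φ t - φ 0 ≤ t * M) : d ≤ M := by
  have hs : Tendsto (slope φ 0) (𝓝[≠] 0) (𝓝 d) := hasDerivAt_iff_tendsto_slope.mp hφ
  have hs' : Tendsto (slope φ 0) (𝓝[>] 0) (𝓝 d) :=
    hs.mono_left (nhdsWithin_mono _ (fun t ht => ne_of_gt ht))
  refine le_of_tendsto hs' ?_
  filter_upwards [Ioo_mem_nhdsGT_of_mem (Set.mem_Ico.mpr ⟨le_refl (0:ℝ), one_pos⟩)] with t ht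
  have ht0 : (0:ℝ) < t := ht.1
  have := h t ⟨ht.1, le_of_lt ht.2⟩
  rw [slope_def_field, sub_zero, div_le_iff₀ ht0]
  linarith

lemma aux_line_deriv (g : H → ℝ) (g' : H → H) (hg : ∀ z, HasGradientAt g (g' z) z)
    (x v : H) (t : ℝ) : HasDerivAt (fun s : ℝ => g (x + s • v)) ⟪g' (x + t • v), v⟫ t := by
  have h1 : HasDerivAt (fun s : ℝ => x + s • v) v t := by
    simpa using ((hasDerivAt_id t).smul_const v).const_add x
  have h2 := (hg (x + t • v)).hasFDerivAt
  have h3 := h2.comp_hasDerivAt t h1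
  simp at h3
  exact h3

lemma aux_grad_ineq (g : H → ℝ) (g' : H → H) (hg_convex : ConvexOn ℝ Set.univ g)
    (hg : ∀ z, HasGradientAt g (g' z) z) (z y : H) :
    g z + ⟪g' z, y - z⟫ ≤ g y := by
  set v := y - z with hv
  have hd : HasDerivAt (fun s : ℝ => g (z + s • v)) ⟪g' z, v⟫ 0 := by
    have := aux_line_deriv g g' hg z v 0
    simpa using this
  have hle : ⟪g' z, v⟫ ≤ g y - g z := by
    refine aux_deriv_le hd ?_
    intro t ht
    have h01 : (0:ℝ) ≤ 1 - t := by linarith [ht.2]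
    have := hg_convex.2 (Set.mem_univ z) (Set.mem_univ y) h01 (le_of_lt ht.1) (by ring)
    have hzy : (1 - t) • z + t • y = z + t • v := by
      rw [hv]; rw [smul_sub]; module
    rw [hzy] at this
    simp only [smul_eq_mul] at this
    have h0 : z + (0:ℝ) • v = z := by simp
    calc g (z + t • v) - g (z + (0:ℝ) • v) = g (z + t • v) - g z := by rw [h0]
      _ ≤ (1 - t) * g z + t * g y - g z := by linarith
      _ = t * (g y - g z) := by ring
  linarith

lemma aux_descent {β : ℝ} (hβ : 0 < β) (g : H → ℝ) (g' : H → H)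
    (hg : ∀ z, HasGradientAt g (g' z) z)
    (hg_lip : ∀ z w : H, ‖g' z - g' w‖ ≤ β * ‖z - w‖) (z y : H) :
    g y ≤ g z + ⟪g' z, y - z⟫ + β/2 * ‖y - z‖^2 := by
  set v := y - z with hv
  set G : ℝ → ℝ := fun t => g (z + t • v) - t * ⟪g' z, v⟫ - β/2 * ‖v‖^2 * t^2 with hG
  have hG' : ∀ t : ℝ, HasDerivAt G (⟪g' (z + t • v), v⟫ - ⟪g' z, v⟫ - β/2 * ‖v‖^2 * (2*t)) t := by
    intro t
    exact ((aux_line_deriv g g' hg z v t).sub (hasDerivAt_mul_const _)).sub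
      (((hasDerivAt_pow 2 t).const_mul (β/2 * ‖v‖^2)).congr_deriv (by ring))
  have hmono : AntitoneOn G (Set.Icc 0 1) := by
    refine antitoneOn_of_deriv_nonpos (convex_Icc 0 1) ?_ ?_ ?_
    · exact (continuous_iff_continuousAt.mpr fun t => (hG' t).continuousAt).continuousOn
    · intro t ht
      exact ((hG' t).differentiableAt).differentiableWithinAt
    · intro t ht
      rw [interior_Icc] at ht
      rw [(hG' t).deriv]
      have h1 : ⟪g' (z + t • v), v⟫ - ⟪g' z, v⟫ = ⟪g' (z + t • v) - g' z, v⟫ := by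
        rw [inner_sub_left]
      have h2 : ⟪g' (z + t • v) - g' z, v⟫ ≤ ‖g' (z + t • v) - g' z‖ * ‖v‖ :=
        real_inner_le_norm _ _
      have h3 : ‖g' (z + t • v) - g' z‖ ≤ β * ‖t • v‖ := by
        have := hg_lip (z + t • v) z
        simpa using this
      have h4 : ‖t • v‖ = t * ‖v‖ := by
        rw [norm_smul, Real.norm_eq_abs, abs_of_pos ht.1]
      rw [h4] at h3
      nlinarith [mul_le_mul_of_nonneg_right h3 (norm_nonneg v), norm_nonneg v, ht.1.le, h1, h2]
  have := hmono (Set.left_mem_Icc.mpr zero_le_one) (Set.right_mem_Icc.mpr zero_le_one) zero_le_one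
  simp only [hG] at this
  have h0 : z + (0:ℝ) • v = z := by simp
  have h1 : z + (1:ℝ) • v = y := by rw [hv]; simp
  rw [h0, h1] at this
  have : g y - ⟪g' z, v⟫ - β/2 * ‖v‖^2 ≤ g z := by
    simpa using this
  linarith

section
variable {H : Type*} [NormedAddCommGroup H] [InnerProductSpace ℝ H] [CompleteSpace H]

lemma aux_onesided {β : ℝ} (hβ : 0 < β) (g : H → ℝ) (g' : H → H)
    (hg_convex : ConvexOn ℝ Set.univ g)
    (hg : ∀ z, HasGradientAt g (g' z) z)
    (hg_lip : ∀ z w : H, ‖g' z - g' w‖ ≤ β * ‖z - w‖) (z w : H) :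
    g w + ⟪g' w, z - w⟫ + 1/(2*β) * ‖g' z - g' w‖^2 ≤ g z := by
  set Δ := g' z - g' w with hΔ
  set u := z - (1/β) • Δ with hu
  have h1 := aux_descent hβ g g' hg hg_lip z u
  have h2 := aux_grad_ineq g g' hg_convex hg w u
  have e1 : u - z = -((1/β) • Δ) := by rw [hu]; abel
  have e2 : ‖u - z‖^2 = (1/β)^2 * ‖Δ‖^2 := by
    rw [e1, norm_neg, norm_smul, Real.norm_eq_abs, abs_of_pos (by positivity), mul_pow]
  have e3 : ⟪g' z, u - z⟫ = -(1/β * ⟪g' z, Δ⟫) := by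
    rw [e1, inner_neg_right, real_inner_smul_right]
  have e4 : ⟪g' w, u - w⟫ = ⟪g' w, z - w⟫ - 1/β * ⟪g' w, Δ⟫ := by
    have : u - w = (z - w) - (1/β) • Δ := by rw [hu]; abel
    rw [this, inner_sub_right, real_inner_smul_right]
  have e5 : ⟪g' z, Δ⟫ - ⟪g' w, Δ⟫ = ‖Δ‖^2 := by
    rw [← inner_sub_left, ← hΔ, real_inner_self_eq_norm_sq]
  rw [e3, e2] at h1
  rw [e4] at h2
  have hβ' : (0:ℝ) < 2*β := by positivity
  have expand : β/2 * ((1/β)^2 * ‖Δ‖^2) = 1/(2*β) * ‖Δ‖^2 := by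
    field_simp
  rw [expand] at h1
  have e5' : 1/β * ⟪g' z, Δ⟫ - 1/β * ⟪g' w, Δ⟫ = 1/β * ‖Δ‖^2 := by rw [← mul_sub, e5]
  have e6 : 1/β * ‖Δ‖^2 = 1/(2*β) * ‖Δ‖^2 + 1/(2*β) * ‖Δ‖^2 := by field_simp; ring
  linarith

lemma aux_coco {β : ℝ} (hβ : 0 < β) (g : H → ℝ) (g' : H → H)
    (hg_convex : ConvexOn ℝ Set.univ g)
    (hg : ∀ z, HasGradientAt g (g' z) z)
    (hg_lip : ∀ z w : H, ‖g' z - g' w‖ ≤ β * ‖z - w‖) (z w : H) :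
    1/β * ‖g' z - g' w‖^2 ≤ ⟪g' z - g' w, z - w⟫ := by
  have h1 := aux_onesided hβ g g' hg_convex hg hg_lip z w
  have h2 := aux_onesided hβ g g' hg_convex hg hg_lip w z
  have e1 : ‖g' w - g' z‖ = ‖g' z - g' w‖ := norm_sub_rev _ _
  have e2 : ⟪g' z, w - z⟫ = -⟪g' z, z - w⟫ := by
    rw [← inner_neg_right]; congr 1; abel
  have e3 : ⟪g' z - g' w, z - w⟫ = ⟪g' z, z - w⟫ - ⟪g' w, z - w⟫ := inner_sub_left _ _ _
  rw [e1, e2] at h2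
  have hβ' : (0:ℝ) < 2*β := by positivity
  have : 1/β * ‖g' z - g' w‖^2 = 1/(2*β) * ‖g' z - g' w‖^2 + 1/(2*β) * ‖g' z - g' w‖^2 := by
    field_simp; ring
  linarith

variable (C : Set H) (hC_convex : Convex ℝ C) (projC : H → H)
  (hproj : ∀ z : H, projC z ∈ C ∧ ∀ w ∈ C, ‖z - projC z‖ ≤ ‖z - w‖)

include hC_convex hproj in
lemma aux_vi : ∀ z : H, ∀ w ∈ C, ⟪z - projC z, w - projC z⟫ ≤ 0 := by
  intro z
  haveI : Nonempty C := ⟨⟨projC z, (hproj z).1⟩⟩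
  have hbdd : BddBelow (Set.range fun w : C => ‖z - (w:H)‖) := by
    refine ⟨0, ?_⟩; rintro _ ⟨w, rfl⟩; positivity
  have hinf : ‖z - projC z‖ = ⨅ w : C, ‖z - (w:H)‖ := by
    refine le_antisymm (le_ciInf fun w => (hproj z).2 w w.2) ?_
    exact ciInf_le hbdd ⟨projC z, (hproj z).1⟩
  exact (norm_eq_iInf_iff_real_inner_le_zero hC_convex (hproj z).1).mp hinf

include hC_convex hproj in
lemma aux_uniq : ∀ z v : H, v ∈ C → (∀ w ∈ C, ⟪z - v, w - v⟫ ≤ 0) → projC z = v := by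
  intro z v hv hvw
  have h1 := aux_vi C hC_convex projC hproj z v hv
  have h2 := hvw (projC z) (hproj z).1
  have key : ⟪projC z - v, projC z - v⟫ ≤ 0 := by
    have e1 : ⟪projC z - v, projC z - v⟫ = ⟪z - v, projC z - v⟫ - ⟪z - projC z, projC z - v⟫ := by
      rw [← inner_sub_left]; congr 1; abel
    have e2 : ⟪z - projC z, projC z - v⟫ = -⟪z - projC z, v - projC z⟫ := by
      rw [← inner_neg_right]; congr 1; abel
    linarith
  have : projC z - v = 0 := by
    have := real_inner_self_nonneg (x := projC z - v)
    have hz : ⟪projC z - v, projC z - v⟫ = 0 := le_antisymm key this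
    exact inner_self_eq_zero.mp hz
  exact sub_eq_zero.mp this

include hC_convex hproj in
lemma aux_firm : ∀ a b : H, ‖projC a - projC b‖^2 ≤ ⟪a - b, projC a - projC b⟫ := by
  intro a b
  have h1 := aux_vi C hC_convex projC hproj a (projC b) (hproj b).1
  have h2 := aux_vi C hC_convex projC hproj b (projC a) (hproj a).1
  rw [← real_inner_self_eq_norm_sq]
  simp only [inner_sub_left, inner_sub_right] at *
  linarith [real_inner_comm (projC a) (projC b), real_inner_comm a (projC a),
    real_inner_comm b (projC b)]

include hC_convex hproj in
lemma aux_nonexp : ∀ a b : H, ‖projC a - projC b‖ ≤ ‖a - b‖ := by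
  intro a b
  have h1 := aux_firm C hC_convex projC hproj a b
  have h2 := real_inner_le_norm (a - b) (projC a - projC b)
  rcases eq_or_lt_of_le (norm_nonneg (projC a - projC b)) with h | h
  · rw [← h]; positivity
  · nlinarith

end

end

section
variable {H : Type*} [NormedAddCommGroup H] [InnerProductSpace ℝ H] [CompleteSpace H]

lemma aux_sqrt {f : ℕ → ℝ} (hf : ∀ n, 0 ≤ f n)
    (h : Filter.Tendsto (fun n => (f n)^2) Filter.atTop (𝓝 0)) :
    Filter.Tendsto f Filter.atTop (𝓝 0) := by
  have h2 := (Real.continuous_sqrt.tendsto 0).comp h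
  rw [Real.sqrt_zero] at h2
  exact h2.congr fun n => Real.sqrt_sq (hf n)

lemma aux_opt (C : Set H) (hC_convex : Convex ℝ C) (g : H → ℝ) (g' : H → H)
    (hg : ∀ z, HasGradientAt g (g' z) z) (p : H) (hp : p ∈ C) (hmin : ∀ y ∈ C, g p ≤ g y) :
    ∀ w ∈ C, 0 ≤ ⟪g' p, w - p⟫ := by
  intro w hw
  have hd : HasDerivAt (fun s : ℝ => g (p + s • (w - p))) ⟪g' p, w - p⟫ 0 := by
    simpa using aux_line_deriv g g' hg p (w - p) 0
  have h := aux_deriv_le (M := 0) hd.neg ?_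
  · linarith
  · intro t ht
    have hmem : p + t • (w - p) ∈ C := hC_convex.add_smul_sub_mem hp hw ⟨ht.1.le, ht.2⟩
    have h1 := hmin _ hmem
    have h0 : p + (0:ℝ) • (w - p) = p := by simp
    show -g (p + t • (w - p)) - -g (p + (0:ℝ) • (w - p)) ≤ t * 0
    rw [h0]
    linarith

end

noncomputable section

/-- Convergence of the projected gradient method to a minimizer of `g` over `C`. -/
theorem projected_gradient_iterate_convergence
    {H : Type*} [NormedAddCommGroup H] [InnerProductSpace ℝ H] [FiniteDimensional ℝ H]
    (β : ℝ) (hβ : 0 < β)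
    (C : Set H) (hC_ne : C.Nonempty) (hC_closed : IsClosed C) (hC_convex : Convex ℝ C)
    (g : H → ℝ) (g' : H → H)
    (hg_convex : ConvexOn ℝ Set.univ g)
    (hg_grad : ∀ z : H, HasGradientAt g (g' z) z)
    (hg_lip : ∀ z w : H, ‖g' z - g' w‖ ≤ β * ‖z - w‖)
    (xstar : H) (hxstar_mem : xstar ∈ C) (hxstar : ∀ y ∈ C, g xstar ≤ g y)
    (projC : H → H)
    (hproj : ∀ z : H, projC z ∈ C ∧ ∀ w ∈ C, ‖z - projC z‖ ≤ ‖z - w‖)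
    (ε : ℝ) (hε : 0 < ε) (hεβ : ε < 1/β)
    (γ : ℕ → ℝ) (hγ : ∀ n, γ n ∈ Set.Icc ε (2/β - ε))
    (x : ℕ → H) (hx0 : x 0 ∈ C)
    (hiter : ∀ n, x (n+1) = projC (x n - γ n • g' (x n))) :
    ∃ xlim : H, Tendsto x atTop (𝓝 xlim) ∧ xlim ∈ C ∧ ∀ y ∈ C, g xlim ≤ g y := by
  have hxC : ∀ n, x n ∈ C := by
    intro n
    cases n with
    | zero => exact hx0
    | succ k => rw [hiter k]; exact (hproj _).1
  have hβ2 : (0:ℝ) < 2/β := by positivity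
  -- the key Fejér-type inequality
  have key : ∀ p, p ∈ C → (∀ y ∈ C, g p ≤ g y) → ∀ n,
      ε^2 * ‖g' (x n) - g' p‖^2
        + ‖(x n - x (n+1)) - γ n • (g' (x n) - g' p)‖^2
        + ‖x (n+1) - p‖^2 ≤ ‖x n - p‖^2 := by
    intro p hp hmin n
    obtain ⟨hγ1, hγ2⟩ := hγ n
    have hγpos : 0 < γ n := lt_of_lt_of_le hε hγ1
    have hopt := aux_opt C hC_convex g g' hg_grad p hp hmin
    have hfp : projC (p - γ n • g' p) = p := by
      refine aux_uniq C hC_convex projC hproj _ p hp ?_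
      intro w hw
      have e : p - γ n • g' p - p = -(γ n • g' p) := by abel
      rw [e, inner_neg_left, real_inner_smul_left]
      have := mul_nonneg hγpos.le (hopt w hw)
      linarith
    set a := x n - γ n • g' (x n) with hadef
    set b := p - γ n • g' p with hbdef
    set Δ := g' (x n) - g' p with hΔdef
    have hfirm : ‖x (n+1) - p‖^2 ≤ ⟪a - b, x (n+1) - p⟫ := by
      have h := aux_firm C hC_convex projC hproj a b
      rw [hbdef] at h
      rw [hfp] at h
      rw [hiter n]
      exact h
    have hab : a - b = (x n - p) - γ n • Δ := by
      rw [hadef, hbdef, hΔdef, smul_sub]; abel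
    have hu : ‖(a - b) - (x (n+1) - p)‖^2
        = ‖a - b‖^2 - 2 * ⟪a - b, x (n+1) - p⟫ + ‖x (n+1) - p‖^2 :=
      norm_sub_sq_real _ _
    have hab2 : ‖a - b‖^2
        = ‖x n - p‖^2 - 2 * (γ n * ⟪x n - p, Δ⟫) + (γ n)^2 * ‖Δ‖^2 := by
      rw [hab, norm_sub_sq_real, norm_smul, real_inner_smul_right, Real.norm_eq_abs,
        abs_of_pos hγpos, mul_pow]
    have hcoco := aux_coco hβ g g' hg_convex hg_grad hg_lip (x n) p
    have hcoco' : 1/β * ‖Δ‖^2 ≤ ⟪x n - p, Δ⟫ := by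
      rw [real_inner_comm] at hcoco; exact hcoco
    have hprod : ε^2 ≤ γ n * (2/β - γ n) := by nlinarith
    have hquad : ‖a - b‖^2 ≤ ‖x n - p‖^2 - ε^2 * ‖Δ‖^2 := by
      rw [hab2]
      have hm := mul_le_mul_of_nonneg_left hcoco' hγpos.le
      have hp2 := mul_nonneg (sub_nonneg.mpr hprod) (sq_nonneg ‖Δ‖)
      have hb : γ n * (2/β - γ n) * ‖Δ‖^2 = 2 * (γ n * (1/β * ‖Δ‖^2)) - (γ n)^2 * ‖Δ‖^2 := by
        ring
      nlinarith [hm, hp2, hb]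
    have hueq : (a - b) - (x (n+1) - p) = (x n - x (n+1)) - γ n • Δ := by
      rw [hab]; abel
    rw [← hueq]
    linarith [hfirm, hu, hquad]
  -- Fejér monotonicity with respect to xstar
  have ha_anti : Antitone (fun n => ‖x n - xstar‖^2) := by
    apply antitone_nat_of_succ_le
    intro n
    have h := key xstar hxstar_mem hxstar n
    have h1 : 0 ≤ ε^2 * ‖g' (x n) - g' xstar‖^2 := by positivity
    have h2 : 0 ≤ ‖(x n - x (n+1)) - γ n • (g' (x n) - g' xstar)‖^2 := by positivity
    show ‖x (n+1) - xstar‖^2 ≤ ‖x n - xstar‖^2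
    linarith
  have ha_tend : Tendsto (fun n => ‖x n - xstar‖^2) atTop (𝓝 (⨅ n, ‖x n - xstar‖^2)) :=
    tendsto_atTop_ciInf ha_anti ⟨0, by rintro _ ⟨n, rfl⟩; positivity⟩
  have hdiff : Tendsto (fun n => ‖x n - xstar‖^2 - ‖x (n+1) - xstar‖^2) atTop (𝓝 0) := by
    have h2 : Tendsto (fun n => ‖x (n+1) - xstar‖^2) atTop (𝓝 (⨅ n, ‖x n - xstar‖^2)) :=
      ha_tend.comp (tendsto_add_atTop_nat 1)
    simpa using ha_tend.sub h2
  have hΔsq : Tendsto (fun n => ‖g' (x n) - g' xstar‖^2) atTop (𝓝 0) := by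
    apply squeeze_zero (g := fun n => (‖x n - xstar‖^2 - ‖x (n+1) - xstar‖^2)/ε^2)
      (fun n => by positivity) ?_ ?_
    · intro n
      have h := key xstar hxstar_mem hxstar n
      rw [le_div_iff₀ (by positivity)]
      nlinarith [sq_nonneg ‖(x n - x (n+1)) - γ n • (g' (x n) - g' xstar)‖,
        sq_nonneg ‖x (n+1) - xstar‖]
    · simpa using hdiff.div_const (ε^2)
  have hΔ : Tendsto (fun n => ‖g' (x n) - g' xstar‖) atTop (𝓝 0) :=
    aux_sqrt (fun n => norm_nonneg _) hΔsq
  have husq : Tendsto (fun n => ‖(x n - x (n+1)) - γ n • (g' (x n) - g' xstar)‖^2) atTop (𝓝 0) := by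
    apply squeeze_zero (g := fun n => ‖x n - xstar‖^2 - ‖x (n+1) - xstar‖^2)
      (fun n => by positivity) ?_ hdiff
    intro n
    have h := key xstar hxstar_mem hxstar n
    have h1 : 0 ≤ ε^2 * ‖g' (x n) - g' xstar‖^2 := by positivity
    have h2 : 0 ≤ ‖x (n+1) - xstar‖^2 := by positivity
    show ‖(x n - x (n+1)) - γ n • (g' (x n) - g' xstar)‖^2
      ≤ ‖x n - xstar‖^2 - ‖x (n+1) - xstar‖^2
    linarith
  have hu : Tendsto (fun n => ‖(x n - x (n+1)) - γ n • (g' (x n) - g' xstar)‖) atTop (𝓝 0) :=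
    aux_sqrt (fun n => norm_nonneg _) husq
  have hstep : Tendsto (fun n => x (n+1) - x n) atTop (𝓝 0) := by
    rw [tendsto_zero_iff_norm_tendsto_zero]
    apply squeeze_zero (g := fun n =>
        ‖(x n - x (n+1)) - γ n • (g' (x n) - g' xstar)‖ + (2/β) * ‖g' (x n) - g' xstar‖)
      (fun n => norm_nonneg _) ?_ ?_
    · intro n
      obtain ⟨hγ1, hγ2⟩ := hγ n
      have hγpos : 0 < γ n := lt_of_lt_of_le hε hγ1
      show ‖x (n+1) - x n‖
        ≤ ‖(x n - x (n+1)) - γ n • (g' (x n) - g' xstar)‖ + (2/β) * ‖g' (x n) - g' xstar‖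
      have e : x (n+1) - x n
          = -(((x n - x (n+1)) - γ n • (g' (x n) - g' xstar)) + γ n • (g' (x n) - g' xstar)) := by
        abel
      rw [e, norm_neg]
      refine le_trans (norm_add_le _ _) ?_
      have e2 : ‖γ n • (g' (x n) - g' xstar)‖ = γ n * ‖g' (x n) - g' xstar‖ := by
        rw [norm_smul, Real.norm_eq_abs, abs_of_pos hγpos]
      rw [e2]
      have h3 : γ n * ‖g' (x n) - g' xstar‖ ≤ (2/β) * ‖g' (x n) - g' xstar‖ :=
        mul_le_mul_of_nonneg_right (by linarith) (norm_nonneg _)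
      linarith
    · simpa using hu.add (hΔ.const_mul (2/β))
  -- bounded, extract convergent subsequences
  have hball : ∀ n, x n ∈ Metric.closedBall xstar (‖x 0 - xstar‖) := by
    intro n
    rw [Metric.mem_closedBall, dist_eq_norm]
    have h : ‖x n - xstar‖^2 ≤ ‖x 0 - xstar‖^2 := ha_anti (Nat.zero_le n)
    nlinarith [norm_nonneg (x n - xstar), norm_nonneg (x 0 - xstar)]
  obtain ⟨xbar, -, φ, hφ, hxφ⟩ := tendsto_subseq_of_bounded Metric.isBounded_closedBall hball
  obtain ⟨γbar, hγbar, ψ, hψ, hγψ⟩ :=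
    (isCompact_Icc (a := ε) (b := 2/β - ε)).tendsto_subseq (fun n => hγ (φ n))
  set σ : ℕ → ℕ := φ ∘ ψ with hσdef
  have hσ : StrictMono σ := hφ.comp hψ
  have hσtop : Tendsto σ atTop atTop := hσ.tendsto_atTop
  have hxσ : Tendsto (fun n => x (σ n)) atTop (𝓝 xbar) := hxφ.comp hψ.tendsto_atTop
  have hγσ : Tendsto (fun n => γ (σ n)) atTop (𝓝 γbar) := hγψ
  have hxbarC : xbar ∈ C := hC_closed.mem_of_tendsto hxσ (Filter.Eventually.of_forall fun n => hxC _)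
  have hnormσ : Tendsto (fun n => ‖x (σ n) - xbar‖) atTop (𝓝 0) :=
    tendsto_iff_norm_sub_tendsto_zero.mp hxσ
  have hg'σ : Tendsto (fun n => g' (x (σ n))) atTop (𝓝 (g' xbar)) := by
    rw [tendsto_iff_norm_sub_tendsto_zero]
    apply squeeze_zero (g := fun n => β * ‖x (σ n) - xbar‖) (fun n => norm_nonneg _) ?_ ?_
    · intro n; exact hg_lip _ _
    · simpa using hnormσ.const_mul β
  have hx1σ : Tendsto (fun n => x (σ n + 1)) atTop (𝓝 xbar) := by
    have h2 : Tendsto (fun n => x (σ n + 1) - x (σ n)) atTop (𝓝 0) := hstep.comp hσtop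
    have h3 := hxσ.add h2
    simp only [add_zero] at h3
    refine h3.congr fun n => ?_
    abel
  have hz : Tendsto (fun n => x (σ n) - γ (σ n) • g' (x (σ n))) atTop
      (𝓝 (xbar - γbar • g' xbar)) := hxσ.sub (hγσ.smul hg'σ)
  have hprojz : Tendsto (fun n => projC (x (σ n) - γ (σ n) • g' (x (σ n)))) atTop
      (𝓝 (projC (xbar - γbar • g' xbar))) := by
    rw [tendsto_iff_norm_sub_tendsto_zero]
    apply squeeze_zero (g := fun n =>
        ‖(x (σ n) - γ (σ n) • g' (x (σ n))) - (xbar - γbar • g' xbar)‖)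
      (fun n => norm_nonneg _) ?_ (tendsto_iff_norm_sub_tendsto_zero.mp hz)
    intro n
    exact aux_nonexp C hC_convex projC hproj _ _
  have hfix : projC (xbar - γbar • g' xbar) = xbar := by
    have heq : (fun n => projC (x (σ n) - γ (σ n) • g' (x (σ n)))) = fun n => x (σ n + 1) :=
      funext fun n => (hiter (σ n)).symm
    rw [heq] at hprojz
    exact tendsto_nhds_unique hprojz hx1σ
  have hγbarpos : 0 < γbar := lt_of_lt_of_le hε hγbar.1
  have hVI : ∀ w ∈ C, 0 ≤ ⟪g' xbar, w - xbar⟫ := by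
    intro w hw
    have h := aux_vi C hC_convex projC hproj (xbar - γbar • g' xbar) w hw
    rw [hfix] at h
    have e : xbar - γbar • g' xbar - xbar = -(γbar • g' xbar) := by abel
    rw [e, inner_neg_left, real_inner_smul_left] at h
    by_contra hneg
    push_neg at hneg
    nlinarith
  have hminbar : ∀ y ∈ C, g xbar ≤ g y := by
    intro y hy
    have h1 := aux_grad_ineq g g' hg_convex hg_grad xbar y
    have h2 := hVI y hy
    linarith
  have hb_anti : Antitone (fun n => ‖x n - xbar‖^2) := by
    apply antitone_nat_of_succ_le
    intro n
    have h := key xbar hxbarC hminbar n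
    have h1 : 0 ≤ ε^2 * ‖g' (x n) - g' xbar‖^2 := by positivity
    have h2 : 0 ≤ ‖(x n - x (n+1)) - γ n • (g' (x n) - g' xbar)‖^2 := by positivity
    show ‖x (n+1) - xbar‖^2 ≤ ‖x n - xbar‖^2
    linarith
  have hb_tend : Tendsto (fun n => ‖x n - xbar‖^2) atTop (𝓝 (⨅ n, ‖x n - xbar‖^2)) :=
    tendsto_atTop_ciInf hb_anti ⟨0, by rintro _ ⟨n, rfl⟩; positivity⟩
  have hbσ : Tendsto (fun n => ‖x (σ n) - xbar‖^2) atTop (𝓝 0) := by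
    simpa using hnormσ.pow 2
  have hinf0 : (⨅ n, ‖x n - xbar‖^2) = 0 :=
    tendsto_nhds_unique (hb_tend.comp hσtop) hbσ
  have hb0 : Tendsto (fun n => ‖x n - xbar‖^2) atTop (𝓝 0) := hinf0 ▸ hb_tend
  have hxlim : Tendsto x atTop (𝓝 xbar) := by
    rw [tendsto_iff_norm_sub_tendsto_zero]
    exact aux_sqrt (fun n => norm_nonneg _) hb0
  exact ⟨xbar, hxlim, hxbarC, hminbar⟩

end
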